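/- Let b, c, T be real numbers with 0 ≤ c < b < T. Then ∫_{b}^{T} (s² − b²)^{−1/2} (s² − c²)^{−1/2} ds ≤ (1/(2b)) · ln(1 + 4T²/(b² − c²)). -/

import Mathlib

open MeasureTheory Set

/-- Let `b, c, T` be real numbers with `0 ≤ c < b < T`. Then
`∫_{b}^{T} (s² − b²)^{−1/2} (s² − c²)^{−1/2} ds ≤ (1/(2b)) ln(1 + 4T²/(b² − c²))`. -/
theorem stmt_11 (b c T : ℝ) (hc : 0 ≤ c) (hcb : c < b) (hbT : b < T) :
    (∫⁻ s in Ioo b T,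
        ENNReal.ofReal ((Real.sqrt (s ^ 2 - b ^ 2))⁻¹ * (Real.sqrt (s ^ 2 - c ^ 2))⁻¹)) ≤
      ENNReal.ofReal (1 / (2 * b) * Real.log (1 + 4 * T ^ 2 / (b ^ 2 - c ^ 2))) := by
  have hb : 0 < b := lt_of_le_of_lt hc hcb
  have hT : 0 < T := hb.trans hbT
  have ha : 0 < b ^ 2 - c ^ 2 := by nlinarith
  set F : ℝ → ℝ := fun s => b⁻¹ * Real.log (Real.sqrt (s ^ 2 - b ^ 2) + Real.sqrt (s ^ 2 - c ^ 2))
    with hF_def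
  set g : ℝ → ℝ := fun s =>
      s / b * ((Real.sqrt (s ^ 2 - b ^ 2))⁻¹ * (Real.sqrt (s ^ 2 - c ^ 2))⁻¹) with hg_def
  -- derivative of F on (b, T)
  have hderiv : ∀ s ∈ Ioo b T, HasDerivAt F (g s) s := by
    intro s hs
    have hu : 0 < s ^ 2 - b ^ 2 := by nlinarith [hs.1]
    have hv : 0 < s ^ 2 - c ^ 2 := by nlinarith [hs.1]
    have hsu : 0 < Real.sqrt (s ^ 2 - b ^ 2) := Real.sqrt_pos.2 hu
    have hsv : 0 < Real.sqrt (s ^ 2 - c ^ 2) := Real.sqrt_pos.2 hv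
    have hA : HasDerivAt (fun x : ℝ => Real.sqrt (x ^ 2 - b ^ 2))
        (s / Real.sqrt (s ^ 2 - b ^ 2)) s := by
      have h1 : HasDerivAt (fun x : ℝ => x ^ 2 - b ^ 2) (2 * s) s := by
        simpa using (hasDerivAt_pow 2 s).sub_const (b ^ 2)
      have h2 := (Real.hasDerivAt_sqrt hu.ne').comp s h1
      refine h2.congr_deriv ?_
      field_simp
    have hB : HasDerivAt (fun x : ℝ => Real.sqrt (x ^ 2 - c ^ 2))
        (s / Real.sqrt (s ^ 2 - c ^ 2)) s := by
      have h1 : HasDerivAt (fun x : ℝ => x ^ 2 - c ^ 2) (2 * s) s := by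
        simpa using (hasDerivAt_pow 2 s).sub_const (c ^ 2)
      have h2 := (Real.hasDerivAt_sqrt hv.ne').comp s h1
      refine h2.congr_deriv ?_
      field_simp
    have hAB := hA.add hB
    have hlog := (hAB.log (by simp only [Pi.add_apply]; positivity)).const_mul b⁻¹
    refine hlog.congr_deriv ?_
    rw [hg_def]
    simp only [Pi.add_apply]
    field_simp
    ring
  -- continuity of F on [b, T]
  have hcont : ContinuousOn F (Icc b T) := by
    have h1 : Continuous fun s : ℝ => Real.sqrt (s ^ 2 - b ^ 2) + Real.sqrt (s ^ 2 - c ^ 2) := by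
      fun_prop
    refine continuousOn_const.mul (h1.continuousOn.log ?_)
    intro s hs
    have hv : 0 < s ^ 2 - c ^ 2 := by nlinarith [hs.1]
    have := Real.sqrt_pos.2 hv
    have := Real.sqrt_nonneg (s ^ 2 - b ^ 2)
    positivity
  -- nonnegativity of g on (b, T)
  have hgpos : ∀ s ∈ Ioo b T, 0 ≤ g s := by
    intro s hs
    have hsp : 0 < s := hb.trans hs.1
    rw [hg_def]
    positivity
  -- integrability of g
  have hint : IntegrableOn g (Ioc b T) :=
    intervalIntegral.integrableOn_deriv_of_nonneg hcont hderiv hgpos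
  have hint' : IntegrableOn g (Ioo b T) := hint.mono_set Ioo_subset_Ioc_self
  -- FTC
  have hFTC : ∫ s in Ioo b T, g s = F T - F b := by
    rw [← MeasureTheory.integral_Ioc_eq_integral_Ioo,
      ← intervalIntegral.integral_of_le hbT.le]
    exact intervalIntegral.integral_eq_sub_of_hasDerivAt_of_le hbT.le hcont hderiv
      ((intervalIntegrable_iff_integrableOn_Ioc_of_le hbT.le).2 hint)
  -- measurability of g
  have hgm : Measurable g := by
    rw [hg_def]; fun_prop
  -- key real inequality
  have key : F T - F b ≤ 1 / (2 * b) * Real.log (1 + 4 * T ^ 2 / (b ^ 2 - c ^ 2)) := by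
    have hu : 0 < T ^ 2 - b ^ 2 := by nlinarith
    have hv : 0 < T ^ 2 - c ^ 2 := by nlinarith
    have hsu : 0 < Real.sqrt (T ^ 2 - b ^ 2) := Real.sqrt_pos.2 hu
    have hsv : 0 < Real.sqrt (T ^ 2 - c ^ 2) := Real.sqrt_pos.2 hv
    have hsa : 0 < Real.sqrt (b ^ 2 - c ^ 2) := Real.sqrt_pos.2 ha
    set X : ℝ := Real.sqrt (T ^ 2 - b ^ 2) + Real.sqrt (T ^ 2 - c ^ 2) with hX_def
    have hX : 0 < X := by positivity
    have hFb : F b = b⁻¹ * Real.log (Real.sqrt (b ^ 2 - c ^ 2)) := by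
      rw [hF_def]
      simp
    have hX2 : X ^ 2 ≤ (b ^ 2 - c ^ 2) + 4 * T ^ 2 := by
      have h1 := Real.sq_sqrt hu.le
      have h2 := Real.sq_sqrt hv.le
      have h3 := sq_nonneg (Real.sqrt (T ^ 2 - b ^ 2) - Real.sqrt (T ^ 2 - c ^ 2))
      rw [hX_def]
      nlinarith [sq_nonneg b, sq_nonneg c]
    have hFT : F T = b⁻¹ * Real.log X := by
      simp only [hF_def, hX_def]
    have e1 : F T - F b = 1 / (2 * b) * Real.log (X ^ 2 / (b ^ 2 - c ^ 2)) := by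
      rw [hFT, hFb]
      have : Real.log (X ^ 2 / (b ^ 2 - c ^ 2)) = 2 * Real.log X - Real.log (b ^ 2 - c ^ 2) := by
        rw [Real.log_div (by positivity) ha.ne', Real.log_pow]
        push_cast; ring
      rw [this]
      have : Real.log (b ^ 2 - c ^ 2) = 2 * Real.log (Real.sqrt (b ^ 2 - c ^ 2)) := by
        conv_lhs => rw [← Real.sq_sqrt ha.le]
        rw [Real.log_pow]; norm_num
      rw [this]
      field_simp
    rw [e1]
    have hrw : 1 + 4 * T ^ 2 / (b ^ 2 - c ^ 2) = ((b ^ 2 - c ^ 2) + 4 * T ^ 2) / (b ^ 2 - c ^ 2) := by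
      field_simp
    rw [hrw]
    have hlog : Real.log (X ^ 2 / (b ^ 2 - c ^ 2)) ≤
        Real.log (((b ^ 2 - c ^ 2) + 4 * T ^ 2) / (b ^ 2 - c ^ 2)) := by
      apply Real.log_le_log (by positivity)
      gcongr
    exact mul_le_mul_of_nonneg_left hlog (by positivity)
  -- put everything together
  calc
    (∫⁻ s in Ioo b T,
        ENNReal.ofReal ((Real.sqrt (s ^ 2 - b ^ 2))⁻¹ * (Real.sqrt (s ^ 2 - c ^ 2))⁻¹))
        ≤ ∫⁻ s in Ioo b T, ENNReal.ofReal (g s) := by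
      apply setLIntegral_mono (ENNReal.measurable_ofReal.comp hgm)
      intro s hs
      apply ENNReal.ofReal_le_ofReal
      have h1 : (1 : ℝ) ≤ s / b := (one_le_div hb).2 hs.1.le
      have h2 : 0 ≤ (Real.sqrt (s ^ 2 - b ^ 2))⁻¹ * (Real.sqrt (s ^ 2 - c ^ 2))⁻¹ := by positivity
      calc (Real.sqrt (s ^ 2 - b ^ 2))⁻¹ * (Real.sqrt (s ^ 2 - c ^ 2))⁻¹
          = 1 * ((Real.sqrt (s ^ 2 - b ^ 2))⁻¹ * (Real.sqrt (s ^ 2 - c ^ 2))⁻¹) := by ring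
        _ ≤ s / b * ((Real.sqrt (s ^ 2 - b ^ 2))⁻¹ * (Real.sqrt (s ^ 2 - c ^ 2))⁻¹) :=
            mul_le_mul_of_nonneg_right h1 h2
        _ = g s := rfl
    _ = ENNReal.ofReal (∫ s in Ioo b T, g s) := by
      rw [MeasureTheory.ofReal_integral_eq_lintegral_ofReal hint'
        ((ae_restrict_iff' measurableSet_Ioo).2 (Filter.Eventually.of_forall hgpos))]
    _ ≤ ENNReal.ofReal (1 / (2 * b) * Real.log (1 + 4 * T ^ 2 / (b ^ 2 - c ^ 2))) := by
      rw [hFTC]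
      exact ENNReal.ofReal_le_ofReal key
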